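/- Fix an integer K ≥ 2 and real numbers α, β with α ≥ 2 and β ≥ 0. For S > 1 define F(S) := min{ (1/2)·log₂(1 + S/(1+S^α)) + (1/2)·log₂(1 + S + S^α) + (K−1)/2 + log₂ K , min{ log₂(1+S), log₂(1 + S^α + S/(1+S^α)) } + β·log₂ S }. Then F(S)/log₂ S tends to min{ 1 + β, α/2 } as S tends to infinity. -/

import Mathlib

open Real Filter

/-- If `f` is eventually sandwiched between `c * S^a` and `C * S^a`, then
`log (f S) / log S → a`. -/
lemma log_ratio_tendsto (a c C : ℝ) (hc : 0 < c) (hC : 0 < C) (f : ℝ → ℝ)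
    (h1 : ∀ᶠ S in atTop, c * S ^ a ≤ f S)
    (h2 : ∀ᶠ S in atTop, f S ≤ C * S ^ a) :
    Tendsto (fun S => Real.log (f S) / Real.log S) atTop (nhds a) := by
  have hlog : Tendsto Real.log atTop atTop := Real.tendsto_log_atTop
  have hinv : Tendsto (fun S : ℝ => (Real.log S)⁻¹) atTop (nhds 0) :=
    hlog.inv_tendsto_atTop
  have hlo : Tendsto (fun S : ℝ => Real.log c * (Real.log S)⁻¹ + a) atTop (nhds a) := by
    have := (hinv.const_mul (Real.log c)).add_const a
    simpa using this
  have hhi : Tendsto (fun S : ℝ => Real.log C * (Real.log S)⁻¹ + a) atTop (nhds a) := by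
    have := (hinv.const_mul (Real.log C)).add_const a
    simpa using this
  apply tendsto_of_tendsto_of_tendsto_of_le_of_le' hlo hhi
  · filter_upwards [h1, eventually_gt_atTop 1] with S h1 hS
    have hS0 : (0 : ℝ) < S := lt_trans one_pos hS
    have hlS : 0 < Real.log S := Real.log_pos hS
    have hpos : 0 < c * S ^ a := mul_pos hc (Real.rpow_pos_of_pos hS0 a)
    have : Real.log (c * S ^ a) ≤ Real.log (f S) := Real.log_le_log hpos h1
    rw [Real.log_mul hc.ne' (Real.rpow_pos_of_pos hS0 a).ne', Real.log_rpow hS0] at this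
    have := (div_le_div_iff_of_pos_right hlS).mpr this
    calc Real.log c * (Real.log S)⁻¹ + a
        = (Real.log c + a * Real.log S) / Real.log S := by
          field_simp
      _ ≤ Real.log (f S) / Real.log S := this
  · filter_upwards [h1, h2, eventually_gt_atTop 1] with S h1 h2 hS
    have hS0 : (0 : ℝ) < S := lt_trans one_pos hS
    have hlS : 0 < Real.log S := Real.log_pos hS
    have hfpos : 0 < f S :=
      lt_of_lt_of_le (mul_pos hc (Real.rpow_pos_of_pos hS0 a)) h1
    have : Real.log (f S) ≤ Real.log (C * S ^ a) := Real.log_le_log hfpos h2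
    rw [Real.log_mul hC.ne' (Real.rpow_pos_of_pos hS0 a).ne', Real.log_rpow hS0] at this
    have := (div_le_div_iff_of_pos_right hlS).mpr this
    calc Real.log (f S) / Real.log S
        ≤ (Real.log C + a * Real.log S) / Real.log S := this
      _ = Real.log C * (Real.log S)⁻¹ + a := by field_simp

lemma logb_ratio_tendsto (a c C : ℝ) (hc : 0 < c) (hC : 0 < C) (f : ℝ → ℝ)
    (h1 : ∀ᶠ S in atTop, c * S ^ a ≤ f S)
    (h2 : ∀ᶠ S in atTop, f S ≤ C * S ^ a) :
    Tendsto (fun S => Real.logb 2 (f S) / Real.logb 2 S) atTop (nhds a) := by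
  have h := log_ratio_tendsto a c C hc hC f h1 h2
  refine h.congr fun S => ?_
  rw [Real.logb, Real.logb, div_div_div_cancel_right₀ (by norm_num : Real.log 2 ≠ 0)]

theorem gdof_very_strong (K : ℕ) (hK : 2 ≤ K) (α β : ℝ)
    (hα : 2 ≤ α) (hβ : 0 ≤ β) :
    Tendsto (fun S : ℝ =>
        (min
          ((1 / 2) * logb 2 (1 + S / (1 + S ^ α)) +
            (1 / 2) * logb 2 (1 + S + S ^ α) + ((K : ℝ) - 1) / 2 + logb 2 (K : ℝ))
          (min (logb 2 (1 + S)) (logb 2 (1 + S ^ α + S / (1 + S ^ α))) +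
            β * logb 2 S)) / logb 2 S)
      atTop (nhds (min (1 + β) (α / 2))) := by
  have hα1 : (1 : ℝ) ≤ α := le_trans one_le_two hα
  have hLpos : ∀ᶠ S : ℝ in atTop, 0 < logb 2 S := by
    filter_upwards [eventually_gt_atTop 1] with S hS
    exact Real.logb_pos one_lt_two hS
  have hLtop : Tendsto (fun S : ℝ => logb 2 S) atTop atTop :=
    Real.tendsto_logb_atTop one_lt_two
  have hLinv : Tendsto (fun S : ℝ => (logb 2 S)⁻¹) atTop (nhds 0) :=
    hLtop.inv_tendsto_atTop
  -- generic: constant over L tends to 0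
  have hconst : ∀ d : ℝ, Tendsto (fun S : ℝ => d / logb 2 S) atTop (nhds 0) := by
    intro d
    simpa [div_eq_mul_inv] using hLinv.const_mul d
  -- basic facts for S ≥ 1
  have hbase : ∀ S : ℝ, 1 ≤ S → S * S ≤ S ^ α ∧ S ≤ S ^ α ∧ (0:ℝ) < 1 + S ^ α := by
    intro S hS
    have h2 : S ^ (2:ℝ) ≤ S ^ α := Real.rpow_le_rpow_of_exponent_le hS hα
    rw [show (2:ℝ) = (2:ℕ) by norm_num, Real.rpow_natCast] at h2
    rw [sq] at h2
    have h1 : S ^ (1:ℝ) ≤ S ^ α := Real.rpow_le_rpow_of_exponent_le hS hα1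
    rw [Real.rpow_one] at h1
    have hpos : (0:ℝ) < 1 + S ^ α :=
      add_pos one_pos (Real.rpow_pos_of_pos (lt_of_lt_of_le one_pos hS) α)
    exact ⟨h2, h1, hpos⟩
  -- small term : S / (1 + S^α) → 0
  have hsmall : Tendsto (fun S : ℝ => S / (1 + S ^ α)) atTop (nhds 0) := by
    apply tendsto_of_tendsto_of_tendsto_of_le_of_le' tendsto_const_nhds
      tendsto_inv_atTop_zero
    · filter_upwards [eventually_ge_atTop 1] with S hS
      obtain ⟨_, _, hpos⟩ := hbase S hS
      positivity
    · filter_upwards [eventually_ge_atTop 1] with S hS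
      obtain ⟨h2, _, hpos⟩ := hbase S hS
      have hS0 : (0:ℝ) < S := lt_of_lt_of_le one_pos hS
      rw [div_le_iff₀ hpos]
      calc S = S⁻¹ * (S * S) := by field_simp
        _ ≤ S⁻¹ * (1 + S ^ α) := by
            apply mul_le_mul_of_nonneg_left _ (inv_nonneg.mpr hS0.le)
            linarith [h2]
  -- T3 : logb 2 (1 + S/(1+S^α)) → 0
  have hT3 : Tendsto (fun S : ℝ => logb 2 (1 + S / (1 + S ^ α))) atTop (nhds 0) := by
    have hc : ContinuousAt (fun x : ℝ => logb 2 (1 + x)) 0 := by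
      simp only [Real.logb]
      exact (ContinuousAt.log (by fun_prop) (by norm_num)).div_const _
    have := hc.tendsto.comp hsmall
    simpa [Function.comp_def] using this
  have hT3' : Tendsto (fun S : ℝ => logb 2 (1 + S / (1 + S ^ α)) / logb 2 S)
      atTop (nhds 0) := by
    have := hT3.mul hLinv
    simpa [div_eq_mul_inv] using this
  -- T1 : logb 2 (1+S)/logb 2 S → 1
  have hT1 : Tendsto (fun S : ℝ => logb 2 (1 + S) / logb 2 S) atTop (nhds 1) := by
    apply logb_ratio_tendsto 1 1 2 one_pos two_pos
    · filter_upwards [eventually_ge_atTop 1] with S hS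
      rw [one_mul, Real.rpow_one]; linarith
    · filter_upwards [eventually_ge_atTop 1] with S hS
      rw [Real.rpow_one]; linarith
  -- T2 : logb 2 (1+S+S^α)/logb 2 S → α
  have hT2 : Tendsto (fun S : ℝ => logb 2 (1 + S + S ^ α) / logb 2 S) atTop (nhds α) := by
    apply logb_ratio_tendsto α 1 3 one_pos three_pos
    · filter_upwards [eventually_ge_atTop 1] with S hS
      have hS0 : (0:ℝ) < S := lt_of_lt_of_le one_pos hS
      have := Real.rpow_pos_of_pos hS0 α
      rw [one_mul]; linarith
    · filter_upwards [eventually_ge_atTop 1] with S hS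
      obtain ⟨h2, h1, _⟩ := hbase S hS
      have hone : (1:ℝ) ≤ S ^ α := by
        calc (1:ℝ) ≤ S := hS
          _ ≤ S ^ α := h1
      linarith
  -- TA : first branch / L → α/2
  have hTA : Tendsto (fun S : ℝ =>
      ((1 / 2) * logb 2 (1 + S / (1 + S ^ α)) +
        (1 / 2) * logb 2 (1 + S + S ^ α) + ((K : ℝ) - 1) / 2 + logb 2 (K : ℝ)) / logb 2 S)
      atTop (nhds (α / 2)) := by
    have h := (((hT3'.const_mul (1/2 : ℝ)).add (hT2.const_mul (1/2 : ℝ))).add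
        (hconst (((K : ℝ) - 1) / 2))).add (hconst (logb 2 (K : ℝ)))
    have heq : ((1:ℝ)/2) * 0 + (1/2) * α + 0 + 0 = α / 2 := by ring
    rw [heq] at h
    refine h.congr fun S => ?_
    ring
  -- TB : second branch / L → 1 + β
  have hTB : Tendsto (fun S : ℝ =>
      (min (logb 2 (1 + S)) (logb 2 (1 + S ^ α + S / (1 + S ^ α))) +
        β * logb 2 S) / logb 2 S) atTop (nhds (1 + β)) := by
    have h := hT1.add (tendsto_const_nhds (x := β))
    apply h.congr'
    filter_upwards [eventually_ge_atTop 1, hLpos, eventually_gt_atTop 1]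
      with S hS hL hS1
    have hS0 : (0:ℝ) < S := lt_of_lt_of_le one_pos hS
    obtain ⟨h2, h1, hpos⟩ := hbase S hS
    have hmin : min (logb 2 (1 + S)) (logb 2 (1 + S ^ α + S / (1 + S ^ α)))
        = logb 2 (1 + S) := by
      apply min_eq_left
      apply Real.logb_le_logb_of_le one_lt_two (by linarith)
      have : 0 ≤ S / (1 + S ^ α) := by positivity
      linarith
    rw [hmin, add_div, mul_div_assoc, div_self hL.ne', mul_one]
  -- combine
  have h := hTB.min hTA
  rw [min_comm] at h ⊢
  apply h.congr'
  filter_upwards [hLpos] with S hL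
  rw [min_comm, min_div_div_right hL.le]
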